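/- Let F : (-π, π) → ℝ be the function F(x) = 1 + 1/cos(x/2) - 2·cos(x/2). Then for every natural number k, the k-th iterated derivative of F at 0 is nonnegative: F^{(k)}(0) ≥ 0. Moreover F(0) = 0 and F'(0) = 0 and F''(0) > 0. -/

import Mathlib

open Real Polynomial

noncomputable def F (x : ℝ) : ℝ := 1 + 1 / Real.cos (x / 2) - 2 * Real.cos (x / 2)

/-- Polynomials giving the derivatives of sec: (d/dx)^n sec x = sec x * (P n).eval (tan x). -/
noncomputable def P : ℕ → Polynomial ℝ
  | 0 => 1
  | n + 1 => X * P n + derivative (P n) + X ^ 2 * derivative (P n)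

lemma P_zero_eval : (P 0) = 1 := rfl

lemma P_coeff_nonneg (n : ℕ) : ∀ i, 0 ≤ (P n).coeff i := by
  induction n with
  | zero =>
    intro i
    rw [P_zero_eval, Polynomial.coeff_one]
    split <;> norm_num
  | succ n ih =>
    intro i
    have h1 : 0 ≤ (X * P n).coeff i := by
      cases i with
      | zero => simp [Polynomial.mul_coeff_zero]
      | succ j => rw [Polynomial.coeff_X_mul]; exact ih j
    have h2 : 0 ≤ (derivative (P n)).coeff i := by
      rw [Polynomial.coeff_derivative]
      exact mul_nonneg (ih (i + 1)) (by positivity)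
    have h3 : 0 ≤ (X ^ 2 * derivative (P n)).coeff i := by
      rw [pow_two, mul_assoc]
      cases i with
      | zero => simp [Polynomial.mul_coeff_zero]
      | succ j =>
        rw [Polynomial.coeff_X_mul]
        cases j with
        | zero => simp [Polynomial.mul_coeff_zero]
        | succ k =>
          rw [Polynomial.coeff_X_mul, Polynomial.coeff_derivative]
          exact mul_nonneg (ih (k + 1)) (by positivity)
    show (0:ℝ) ≤ (X * P n + derivative (P n) + X ^ 2 * derivative (P n)).coeff i
    rw [Polynomial.coeff_add, Polynomial.coeff_add]
    linarith

lemma P_coeff_zero_succ (n : ℕ) : (P (n + 1)).coeff 0 = (P n).coeff 1 := by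
  show (X * P n + derivative (P n) + X ^ 2 * derivative (P n)).coeff 0 = _
  rw [Polynomial.coeff_add, Polynomial.coeff_add, Polynomial.mul_coeff_zero,
    Polynomial.mul_coeff_zero, Polynomial.coeff_derivative]
  simp

lemma P_coeff_one_succ (n : ℕ) :
    (P (n + 1)).coeff 1 = (P n).coeff 0 + 2 * (P n).coeff 2 := by
  show (X * P n + derivative (P n) + X ^ 2 * derivative (P n)).coeff 1 = _
  rw [Polynomial.coeff_add, Polynomial.coeff_add]
  have h1 : (X * P n).coeff 1 = (P n).coeff 0 := Polynomial.coeff_X_mul _ 0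
  have h2 : (derivative (P n)).coeff 1 = (P n).coeff 2 * 2 := by
    rw [Polynomial.coeff_derivative]; norm_num
  have h3 : (X ^ 2 * derivative (P n)).coeff 1 = 0 := by
    rw [pow_two, mul_assoc]
    rw [show (1 : ℕ) = 0 + 1 from rfl, Polynomial.coeff_X_mul, Polynomial.mul_coeff_zero]
    simp
  rw [h1, h2, h3]; ring

lemma P_coeff_zero_step (n : ℕ) :
    (P (n + 2)).coeff 0 = (P n).coeff 0 + 2 * (P n).coeff 2 := by
  rw [P_coeff_zero_succ, P_coeff_one_succ]

lemma P_one : (P 1) = X := by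
  show X * P 0 + derivative (P 0) + X ^ 2 * derivative (P 0) = X
  rw [P_zero_eval]; simp

lemma P_two : (P 2) = X ^ 2 + 1 + X ^ 2 := by
  show X * P 1 + derivative (P 1) + X ^ 2 * derivative (P 1) = _
  rw [P_one]; simp [pow_two]

lemma P_coeff_two_two : (P 2).coeff 2 = 2 := by
  rw [P_two]
  simp [Polynomial.coeff_one, Polynomial.coeff_X_pow]
  norm_num

lemma P_coeff_zero_two : (P 2).coeff 0 = 1 := by
  rw [P_two]
  simp [Polynomial.coeff_one, Polynomial.coeff_X_pow]

lemma P_coeff_zero_four_ge : ∀ m, 2 ≤ (P (4 + 2 * m)).coeff 0 := by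
  intro m
  induction m with
  | zero =>
    have h := P_coeff_zero_step 2
    rw [show 4 + 2 * 0 = 2 + 2 by norm_num, h, P_coeff_zero_two, P_coeff_two_two]
    norm_num
  | succ m ih =>
    have hstep := P_coeff_zero_step (4 + 2 * m)
    have hnn := P_coeff_nonneg (4 + 2 * m) 2
    rw [show 4 + 2 * (m + 1) = (4 + 2 * m) + 2 by ring, hstep]
    linarith

/-- shifted cosine: the n-th derivative of cos(x/2) is (1/2)^n * Cc n x at x. -/
noncomputable def Cc (n : ℕ) (x : ℝ) : ℝ := Real.cos (x / 2 + n * (π / 2))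

noncomputable def H (n : ℕ) (x : ℝ) : ℝ :=
  (Real.cos (x / 2))⁻¹ * (P n).eval (Real.tan (x / 2)) - 2 * Cc n x

lemma cos_half_ne_zero {x : ℝ} (hx : x ∈ Set.Ioo (-π) π) : Real.cos (x / 2) ≠ 0 := by
  have h : x / 2 ∈ Set.Ioo (-(π / 2)) (π / 2) := by
    obtain ⟨h1, h2⟩ := hx
    constructor <;> linarith
  exact ne_of_gt (Real.cos_pos_of_mem_Ioo h)

lemma alg (c s e d s' : ℝ) (hc : c ≠ 0) (h : s ^ 2 + c ^ 2 = 1) :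
    (1 / 2 : ℝ) * (c⁻¹ * (s / c * e + d + (s / c) ^ 2 * d) - 2 * (-s')) =
    -(-s * (1 / 2)) / c ^ 2 * e + c⁻¹ * (d * (1 / c ^ 2 * (1 / 2))) - 2 * (-s' * (1 / 2)) := by
  field_simp
  linear_combination d * h

lemma H_hasDerivAt (n : ℕ) {x : ℝ} (hx : x ∈ Set.Ioo (-π) π) :
    HasDerivAt (H n) ((1 / 2) * H (n + 1) x) x := by
  have hc : Real.cos (x / 2) ≠ 0 := cos_half_ne_zero hx
  have hhalf : HasDerivAt (fun y : ℝ => y / 2) (1 / 2) x := (hasDerivAt_id x).div_const 2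
  have hcos : HasDerivAt (fun y : ℝ => Real.cos (y / 2)) (-Real.sin (x / 2) * (1 / 2)) x :=
    by have := (Real.hasDerivAt_cos (x / 2)).comp x hhalf; exact this
  have hinv : HasDerivAt (fun y : ℝ => (Real.cos (y / 2))⁻¹)
      (-(-Real.sin (x / 2) * (1 / 2)) / (Real.cos (x / 2)) ^ 2) x := hcos.inv hc
  have htan : HasDerivAt (fun y : ℝ => Real.tan (y / 2))
      (1 / Real.cos (x / 2) ^ 2 * (1 / 2)) x :=
    by have := (Real.hasDerivAt_tan hc).comp x hhalf; exact this
  have hpoly : HasDerivAt (fun y : ℝ => (P n).eval (Real.tan (y / 2)))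
      ((derivative (P n)).eval (Real.tan (x / 2)) * (1 / Real.cos (x / 2) ^ 2 * (1 / 2))) x :=
    by have := ((P n).hasDerivAt (Real.tan (x / 2))).comp x htan; exact this
  have hprod := hinv.mul hpoly
  have hCc : HasDerivAt (Cc n) (-Real.sin (x / 2 + n * (π / 2)) * (1 / 2)) x :=
    (Real.hasDerivAt_cos (x / 2 + n * (π / 2))).comp x (hhalf.add_const _)
  have htotal := hprod.sub (hCc.const_mul (2 : ℝ))
  refine htotal.congr_deriv ?_
  have hev : (P (n + 1)).eval (Real.tan (x / 2)) =
      Real.tan (x / 2) * (P n).eval (Real.tan (x / 2)) +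
      (derivative (P n)).eval (Real.tan (x / 2)) +
      Real.tan (x / 2) ^ 2 * (derivative (P n)).eval (Real.tan (x / 2)) := by
    show (X * P n + derivative (P n) + X ^ 2 * derivative (P n)).eval _ = _
    simp [Polynomial.eval_mul, Polynomial.eval_add, Polynomial.eval_pow]
  have hC1 : Cc (n + 1) x = -Real.sin (x / 2 + n * (π / 2)) := by
    unfold Cc
    push_cast
    rw [show x / 2 + (n + 1) * (π / 2) = (x / 2 + n * (π / 2)) + π / 2 by ring]
    exact Real.cos_add_pi_div_two _
  have hsc : Real.sin (x / 2) ^ 2 + Real.cos (x / 2) ^ 2 = 1 := Real.sin_sq_add_cos_sq _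
  unfold H
  rw [hev, hC1, Real.tan_eq_sin_div_cos]
  exact (alg _ _ _ _ _ hc hsc).symm

lemma key (n : ℕ) : ∀ x ∈ Set.Ioo (-π) π,
    iteratedDeriv n F x = (if n = 0 then (1 : ℝ) else 0) + (1 / 2) ^ n * H n x := by
  induction n with
  | zero =>
    intro x hx
    rw [iteratedDeriv_zero]
    simp only [if_pos rfl, pow_zero, one_mul]
    unfold F H Cc
    rw [P_zero_eval]
    push_cast
    simp [one_div]
    ring
  | succ n ih =>
    intro x hx
    rw [iteratedDeriv_succ]
    have hopen : Set.Ioo (-π) π ∈ nhds x := isOpen_Ioo.mem_nhds hx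
    have heq : iteratedDeriv n F =ᶠ[nhds x]
        (fun y => (if n = 0 then (1 : ℝ) else 0) + (1 / 2) ^ n * H n y) :=
      Filter.eventuallyEq_of_mem hopen (fun y hy => ih y hy)
    rw [heq.deriv_eq]
    have hd : HasDerivAt (fun y => (if n = 0 then (1 : ℝ) else 0) + (1 / 2) ^ n * H n y)
        ((1 / 2) ^ n * ((1 / 2) * H (n + 1) x)) x :=
      ((H_hasDerivAt n hx).const_mul ((1 / 2 : ℝ) ^ n)).const_add _
    rw [hd.deriv]
    simp only [Nat.succ_ne_zero, if_false, pow_succ]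
    ring

lemma zero_mem : (0 : ℝ) ∈ Set.Ioo (-π) π := by
  constructor
  · linarith [Real.pi_pos]
  · exact Real.pi_pos

lemma H_at_zero (n : ℕ) : H n 0 = (P n).coeff 0 - 2 * Real.cos (n * (π / 2)) := by
  unfold H Cc
  rw [Polynomial.coeff_zero_eq_eval_zero]
  norm_num [Real.tan_zero]

lemma cos_nat_half_pi (n : ℕ) :
    Real.cos ((n : ℝ) * (π / 2)) =
      if n % 4 = 0 then 1 else if n % 4 = 2 then -1 else 0 := by
  have hmod := Nat.mod_add_div n 4
  have hn : (n : ℝ) * (π / 2) = ((n % 4 : ℕ) : ℝ) * (π / 2) + (n / 4 : ℕ) * (2 * π) := by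
    conv_lhs => rw [← hmod]
    push_cast
    ring
  rw [hn, Real.cos_add_nat_mul_two_pi]
  rcases (by omega : n % 4 = 0 ∨ n % 4 = 1 ∨ n % 4 = 2 ∨ n % 4 = 3) with h | h | h | h <;>
    rw [h] <;> norm_num
  · rw [show (2 : ℝ) * (π / 2) = π by ring, Real.cos_pi]
  · rw [show (3 : ℝ) * (π / 2) = π + π / 2 by ring, Real.cos_add_pi_div_two, Real.sin_pi, neg_zero]

theorem F_iterated_deriv_nonneg :
    (∀ k : ℕ, 0 ≤ iteratedDeriv k F 0) ∧
    F 0 = 0 ∧ deriv F 0 = 0 ∧ 0 < iteratedDeriv 2 F 0 := by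
  have hkey : ∀ n : ℕ, iteratedDeriv n F 0 =
      (if n = 0 then (1 : ℝ) else 0) +
        (1 / 2) ^ n * ((P n).coeff 0 - 2 * Real.cos ((n : ℝ) * (π / 2))) := by
    intro n
    rw [key n 0 zero_mem, H_at_zero]
  have hF0 : F 0 = 0 := by unfold F; norm_num
  have h1 : deriv F 0 = 0 := by
    rw [← iteratedDeriv_one, hkey 1, P_one]
    norm_num [Real.cos_pi_div_two, Polynomial.coeff_X_zero]
  have h2 : 0 < iteratedDeriv 2 F 0 := by
    have hc2 : Real.cos (((2 : ℕ) : ℝ) * (π / 2)) = -1 := by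
      rw [show (((2 : ℕ) : ℝ)) * (π / 2) = π by push_cast; ring, Real.cos_pi]
    rw [hkey 2, hc2, P_coeff_zero_two]
    norm_num
  refine ⟨?_, hF0, h1, h2⟩
  intro k
  rw [hkey k, cos_nat_half_pi]
  have h12 : (0 : ℝ) ≤ (1 / 2 : ℝ) ^ k := by positivity
  have hknn := P_coeff_nonneg k 0
  rcases Nat.eq_zero_or_pos k with hk | hk
  · subst hk
    norm_num [P_zero_eval]
  · rw [if_neg hk.ne']
    by_cases h4 : k % 4 = 0
    · have hge : 2 ≤ (P k).coeff 0 := by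
        obtain ⟨m, hm⟩ : ∃ m, k = 4 + 2 * m := ⟨(k - 4) / 2, by omega⟩
        rw [hm]; exact P_coeff_zero_four_ge m
      rw [if_pos h4]
      have := mul_nonneg h12 (by linarith : (0 : ℝ) ≤ (P k).coeff 0 - 2 * 1)
      linarith
    · by_cases h2' : k % 4 = 2
      · rw [if_neg h4, if_pos h2']
        have := mul_nonneg h12 (by linarith : (0 : ℝ) ≤ (P k).coeff 0 - 2 * (-1))
        linarith
      · rw [if_neg h4, if_neg h2']
        have := mul_nonneg h12 (by linarith : (0 : ℝ) ≤ (P k).coeff 0 - 2 * 0)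
        linarith
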